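/- Let G be a finite simple graph, let v be a vertex of G, and let D be a shortest cycle through v (a cycle containing v of minimum length among all cycles of G containing v). If w and x are two vertices on D that have a common neighbor y not on D, then either w and x are adjacent in G, or w and x have a common neighbor z lying on D. -/

import Mathlib

set_option linter.unusedSectionVars false

open SimpleGraph Walk

section Aux
variable {V : Type*} {G : SimpleGraph V} [DecidableEq V]

private lemma length_rotate' {u v : V} (c : G.Walk v v) (h : u ∈ c.support) :
    (c.rotate u h).length = c.length := by
  have := congr_arg Walk.length (c.take_spec h)
  rw [length_append] at this
  simp only [Walk.rotate, length_append]
  omega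

private lemma mem_tail_of_mem_support' {u z : V} {c : G.Walk u u} (hne : 0 < c.length)
    (hz : z ∈ c.support) : z ∈ c.support.tail := by
  cases c with
  | nil => simp at hne
  | cons h p =>
    simp only [Walk.support_cons, List.tail_cons]
    rcases (by simpa using hz : z = u ∨ z ∈ p.support) with rfl | hz
    · exact p.end_mem_support
    · exact hz

private lemma mem_support_rotate_iff' {u v z : V} {c : G.Walk v v} (hlen : 0 < c.length)
    (h : u ∈ c.support) : z ∈ (c.rotate u h).support ↔ z ∈ c.support := by
  have hrot := (Walk.support_rotate c u h).mem_iff (a := z)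
  have hlen' : 0 < (c.rotate u h).length := by rwa [length_rotate']
  constructor
  · intro hz
    exact List.mem_of_mem_tail (hrot.mp (mem_tail_of_mem_support' hlen' hz))
  · intro hz
    exact List.mem_of_mem_tail (hrot.mpr (mem_tail_of_mem_support' hlen hz))

private lemma mem_tail_of_ne_start {a b z : V} (P : G.Walk a b) (hz : z ∈ P.support)
    (hne : z ≠ a) : z ∈ P.support.tail := by
  rw [P.support_eq_cons] at hz
  exact (List.mem_cons.mp hz).resolve_left hne

private lemma short_walk_aux {a b : V} (P : G.Walk a b) (hab : a ≠ b) (hlen : P.length ≤ 2) :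
    G.Adj a b ∨ ∃ z ∈ P.support, G.Adj a z ∧ G.Adj b z := by
  match P with
  | .nil => exact absurd rfl hab
  | .cons h .nil => exact Or.inl h
  | .cons h (.cons h' .nil) => exact Or.inr ⟨_, by simp, h, h'.symm⟩
  | .cons _ (.cons _ (.cons _ _)) => simp [Walk.length_cons] at hlen

private lemma detour_cycle {a b y : V} (Q : G.Walk a b) (hab : a ≠ b)
    (hs : Q.support.Nodup) (he : Q.edges.Nodup) (hy : y ∉ Q.support)
    (hby : G.Adj b y) (hya : G.Adj y a) :
    (Walk.cons hby (Walk.cons hya Q)).IsCycle := by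
  constructor
  · constructor
    · constructor
      simp only [Walk.edges_cons, List.nodup_cons]
      refine ⟨?_, ?_, he⟩
      · simp only [List.mem_cons]
        rintro (h | h)
        · rw [Sym2.eq_iff] at h
          rcases h with ⟨rfl, _⟩ | ⟨rfl, _⟩
          · exact hby.ne rfl
          · exact hab rfl
        · exact hy (Q.snd_mem_support_of_mem_edges h)
      · intro h
        exact hy (Q.fst_mem_support_of_mem_edges h)
    · simp
  · simp only [Walk.support_cons, List.tail_cons, List.nodup_cons]
    exact ⟨hy, hs⟩

end Aux

/-- Let `D` be a shortest cycle through a vertex `v` of a simple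
graph `G`.  If `w` and `x` are two vertices on `D` having a common neighbor `y` not
on `D`, then either `w` and `x` are adjacent, or `w` and `x` have a common
neighbor `z` on `D`. -/
theorem shortest_cycle_common_neighbor
    {V : Type*} (G : SimpleGraph V) (v : V)
    (D : G.Walk v v) (hD : D.IsCycle)
    (hmin : ∀ D' : G.Walk v v, D'.IsCycle → D.length ≤ D'.length)
    (w x y : V) (hwx : w ≠ x)
    (hw : w ∈ D.support) (hx : x ∈ D.support) (hy : y ∉ D.support)
    (hwy : G.Adj w y) (hxy : G.Adj x y) :
    G.Adj w x ∨ ∃ z ∈ D.support, G.Adj w z ∧ G.Adj x z := by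
  classical
  have hDlen : 0 < D.length := by have := hD.three_le_length; omega
  set E := D.rotate w hw with hEdef
  have hEc : E.IsCycle := hD.rotate hw
  have hElen : E.length = D.length := length_rotate' D hw
  have hmemE : ∀ z, z ∈ E.support ↔ z ∈ D.support := fun z =>
    mem_support_rotate_iff' hDlen hw
  have hx' : x ∈ E.support := (hmemE x).mpr hx
  have hv' : v ∈ E.support := (hmemE v).mpr D.start_mem_support
  have hy' : y ∉ E.support := fun h => hy ((hmemE y).mp h)
  set Q₁ := E.takeUntil x hx' with hQ1def
  set Q₂ := E.dropUntil x hx' with hQ2def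
  have hspec : Q₁.append Q₂ = E := E.take_spec hx'
  have hlen : Q₁.length + Q₂.length = E.length := by
    have := congr_arg Walk.length hspec
    rwa [length_append] at this
  have hsupE : E.support = Q₁.support ++ Q₂.support.tail := by
    rw [← hspec, Walk.support_append]
  have hEtail : E.support.tail = Q₁.support.tail ++ Q₂.support.tail := by
    have h2 : Q₁.support = w :: Q₁.support.tail := Q₁.support_eq_cons
    rw [h2] at hsupE
    simpa using congrArg List.tail hsupE
  have htnd : (Q₁.support.tail ++ Q₂.support.tail).Nodup := hEtail ▸ hEc.support_nodup
  have hdisj := List.disjoint_of_nodup_append htnd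
  have hxQ1 : x ∈ Q₁.support.tail := mem_tail_of_ne_start Q₁ Q₁.end_mem_support hwx.symm
  have hwQ2 : w ∈ Q₂.support.tail := mem_tail_of_ne_start Q₂ Q₂.end_mem_support hwx
  have hnd1 : Q₁.support.Nodup := by
    rw [Q₁.support_eq_cons, List.nodup_cons]
    exact ⟨fun hwt => hdisj hwt hwQ2, (List.nodup_append.mp htnd).1⟩
  have hnd2 : Q₂.support.Nodup := by
    rw [Q₂.support_eq_cons, List.nodup_cons]
    exact ⟨fun hxt => hdisj hxQ1 hxt, (List.nodup_append.mp htnd).2.1⟩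
  have hsub1 : Q₁.support ⊆ E.support := fun z hz => by
    rw [hsupE]; exact List.mem_append_left _ hz
  have hsub2 : Q₂.support ⊆ E.support := fun z hz => by
    by_cases hzx : z = x
    · subst hzx; rw [hsupE]; exact List.mem_append_left _ Q₁.end_mem_support
    · rw [hsupE]; exact List.mem_append_right _ (mem_tail_of_ne_start Q₂ hz hzx)
  have hEedges : E.edges = Q₁.edges ++ Q₂.edges := by
    rw [← hspec, Walk.edges_append]
  have hend : E.edges.Nodup := hEc.edges_nodup
  rw [hEedges, List.nodup_append] at hend
  have he1 : Q₁.edges.Nodup := hend.1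
  have he2 : Q₂.edges.Nodup := hend.2.1
  have hyQ1 : y ∉ Q₁.support := fun h => hy' (hsub1 h)
  have hyQ2 : y ∉ Q₂.support := fun h => hy' (hsub2 h)
  have hQ1pos : 0 < Q₁.length := by
    rcases Nat.eq_zero_or_pos Q₁.length with h0 | h
    · exact absurd (Walk.eq_of_length_eq_zero h0) hwx
    · exact h
  have hQ2pos : 0 < Q₂.length := by
    rcases Nat.eq_zero_or_pos Q₂.length with h0 | h
    · exact absurd (Walk.eq_of_length_eq_zero h0) (Ne.symm hwx)
    · exact h
  -- Case on where v lies
  have hv'' : v ∈ Q₁.support ∨ v ∈ Q₂.support := by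
    rw [← hspec, Walk.mem_support_append_iff] at hv'
    exact hv'
  rcases hv'' with hvQ | hvQ
  · -- v on Q₁ : replace Q₂ by the detour x–y–w; new cycle is cons hxy (cons hwy.symm Q₁) at x
    set C := Walk.cons hxy (Walk.cons hwy.symm Q₁) with hCdef
    have hCc : C.IsCycle := detour_cycle Q₁ hwx hnd1 he1 hyQ1 hxy hwy.symm
    have hvC : v ∈ C.support := by
      simp only [hCdef, Walk.support_cons, List.mem_cons]
      exact Or.inr (Or.inr hvQ)
    have hC'c : (C.rotate v hvC).IsCycle := hCc.rotate hvC
    have hle := hmin _ hC'c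
    rw [length_rotate'] at hle
    have hClen : C.length = Q₁.length + 2 := by simp [hCdef]
    have hQ2le : Q₂.length ≤ 2 := by omega
    rcases short_walk_aux Q₂ hwx.symm hQ2le with h | ⟨z, hz, h1, h2⟩
    · exact Or.inl h.symm
    · exact Or.inr ⟨z, (hmemE z).mp (hsub2 hz), h2, h1⟩
  · -- v on Q₂ : new cycle is cons hwy (cons hxy.symm Q₂) at w
    set C := Walk.cons hwy (Walk.cons hxy.symm Q₂) with hCdef
    have hCc : C.IsCycle := detour_cycle Q₂ hwx.symm hnd2 he2 hyQ2 hwy hxy.symm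
    have hvC : v ∈ C.support := by
      simp only [hCdef, Walk.support_cons, List.mem_cons]
      exact Or.inr (Or.inr hvQ)
    have hC'c : (C.rotate v hvC).IsCycle := hCc.rotate hvC
    have hle := hmin _ hC'c
    rw [length_rotate'] at hle
    have hClen : C.length = Q₂.length + 2 := by simp [hCdef]
    have hQ1le : Q₁.length ≤ 2 := by omega
    rcases short_walk_aux Q₁ hwx hQ1le with h | ⟨z, hz, h1, h2⟩
    · exact Or.inl h
    · exact Or.inr ⟨z, (hmemE z).mp (hsub1 hz), h1, h2⟩
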